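/- Let (A, Con, ⊢, Δ) be an information system with witnesses and x, y states. Then x ≪ y in the poset of states ordered by inclusion if and only if there exists (i,V) ∈ Con with {i} ∪ V ⊆ y and (i,V) ⊢ a for every a ∈ x. -/
import Mathlib


variable {A : Type*}

/-- An information system with witnesses `(A, Con, ⊢, Δ)`. -/
structure IsISW (Δ : A) (Con : A → Finset A → Prop)
    (ent : A → Finset A → A → Prop) : Prop where
  dom : ∀ i X a, ent i X a → Con i X
  ax1 : ∀ i, Con i {i}
  ax2 : ∀ i (X Y : Finset A), Y ⊆ X → Con i X → Con i Y
  ax3 : ∀ i, ent i ∅ Δ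
  ax4 : ∀ i (X Y : Finset A), Con i X → (∀ b ∈ Y, ent i X b) → Con i Y
  ax5 : ∀ i (X Y : Finset A) (a : A), Con i X → Con i Y → X ⊆ Y → ent i X a → ent i Y a
  ax6 : ∀ i (X Y : Finset A) (a : A), Con i X → (∀ b ∈ Y, ent i X b) → ent i Y a → ent i X a
  ax7 : ∀ i j : A, Con j {i} → ∀ X, Con i X → Con j X
  ax8 : ∀ (i j : A) (X : Finset A) (a : A), Con j {i} → Con i X → ent i X a → ent j X a
  ax9 : ∀ (i j : A) (X : Finset A) (a : A), Con j {i} → Con i X → ent j X a → ent i X a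
  ax10 : ∀ i (X Y : Finset A), Con i X → (∀ b ∈ Y, ent i X b) →
      ∃ e Z, Con e Z ∧ ent i X e ∧ (∀ b ∈ Z, ent i X b) ∧ (∀ b ∈ Y, ent e Z b)

/-- A state of an information system with witnesses: finitely consistent with a
witness in the state (ST1), entailment-closed (ST2), every element derivable (ST3). -/
def IsState (Con : A → Finset A → Prop) (ent : A → Finset A → A → Prop)
    (x : Set A) : Prop :=
  (∀ F : Finset A, ↑F ⊆ x → ∃ i ∈ x, Con i F) ∧
  (∀ i ∈ x, ∀ X : Finset A, ↑X ⊆ x → Con i X → ∀ a, ent i X a → a ∈ x) ∧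
  (∀ a ∈ x, ∃ i ∈ x, ∃ X : Finset A, ↑X ⊆ x ∧ Con i X ∧ ent i X a)

/-- The way-below relation on the poset of states ordered by inclusion, where
directed suprema are given by unions. -/
def WayBelowSt (Con : A → Finset A → Prop) (ent : A → Finset A → A → Prop)
    (x y : Set A) : Prop :=
  ∀ 𝒮 : Set (Set A), (∀ s ∈ 𝒮, IsState Con ent s) → 𝒮.Nonempty →
    DirectedOn (· ⊆ ·) 𝒮 → y ⊆ ⋃₀ 𝒮 → ∃ s ∈ 𝒮, x ⊆ s

section Aux

variable {Δ : A} {Con : A → Finset A → Prop} {ent : A → Finset A → A → Prop}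

lemma principal_isState (h : IsISW Δ Con ent) {j : A} {W : Finset A}
    (hc : Con j W) : IsState Con ent {a | ent j W a} := by
  refine ⟨?_, ?_, ?_⟩
  · intro F hF
    obtain ⟨e, Z, hcZ, hje, _, heF⟩ := h.ax10 j W F hc (fun b hb => hF hb)
    exact ⟨e, hje, h.ax4 e Z F hcZ heF⟩
  · intro i hi X hX hciX a ha
    have hji : Con j {i} := h.ax4 j W {i} hc (by simpa using hi)
    exact h.ax6 j W X a hc (fun b hb => hX hb) (h.ax8 i j X a hji hciX ha)
  · intro a ha
    obtain ⟨e, Z, hcZ, hje, hjZ, heF⟩ := h.ax10 j W {a} hc (by simpa using ha)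
    exact ⟨e, hje, Z, fun b hb => hjZ b hb, hcZ, heF a (Finset.mem_singleton_self a)⟩

lemma principal_mono (h : IsISW Δ Con ent) {j m : A} {W F : Finset A}
    (hcW : Con j W) (hcF : Con m F) (hj : Con m {j}) (hWF : W ⊆ F) :
    ∀ a, ent j W a → ent m F a := fun a ha =>
  h.ax5 m W F a (h.ax7 j m hj W hcW) hcF hWF (h.ax8 j m W a hj hcW ha)

end Aux

theorem stmt9 {Δ : A} {Con : A → Finset A → Prop} {ent : A → Finset A → A → Prop}
    (h : IsISW Δ Con ent) (x y : Set A)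
    (hx : IsState Con ent x) (hy : IsState Con ent y) :
    WayBelowSt Con ent x y ↔
      ∃ (i : A) (V : Finset A), Con i V ∧ i ∈ y ∧ ↑V ⊆ y ∧ ∀ a ∈ x, ent i V a := by
  classical
  constructor
  · intro hwb
    set 𝒮 : Set (Set A) :=
      {s | ∃ j W, Con j W ∧ j ∈ y ∧ ↑W ⊆ y ∧ s = {a | ent j W a}} with h𝒮
    have hstates : ∀ s ∈ 𝒮, IsState Con ent s := by
      rintro s ⟨j, W, hc, _, _, rfl⟩
      exact principal_isState h hc
    have hne : 𝒮.Nonempty := by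
      obtain ⟨i0, hi0, hc0⟩ := hy.1 ∅ (by simp)
      exact ⟨{a | ent i0 ∅ a}, i0, ∅, hc0, hi0, by simp, rfl⟩
    have hdir : DirectedOn (· ⊆ ·) 𝒮 := by
      rintro s ⟨j, W, hcW, hjy, hWy, rfl⟩ t ⟨k, U, hcU, hky, hUy, rfl⟩
      set F : Finset A := insert j (insert k (W ∪ U)) with hF
      have hFy : ↑F ⊆ y := by
        intro b hb
        simp only [hF, Finset.coe_insert, Set.mem_insert_iff, Finset.coe_union,
          Set.mem_union] at hb
        rcases hb with rfl | rfl | hb | hb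
        · exact hjy
        · exact hky
        · exact hWy hb
        · exact hUy hb
      obtain ⟨m, hmy, hcF⟩ := hy.1 F hFy
      refine ⟨{a | ent m F a}, ⟨m, F, hcF, hmy, hFy, rfl⟩, ?_, ?_⟩
      · intro a ha
        exact principal_mono h hcW hcF
          (h.ax2 m F {j} (by simp [hF]) hcF)
          (fun b hb => by simp [hF, Finset.mem_insert, hb]) a ha
      · intro a ha
        exact principal_mono h hcU hcF
          (h.ax2 m F {k} (by simp [hF]) hcF)
          (fun b hb => by simp [hF, Finset.mem_insert, hb]) a ha
    have hyU : y ⊆ ⋃₀ 𝒮 := by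
      intro a ha
      obtain ⟨i, hiy, X, hXy, hcX, hent⟩ := hy.2.2 a ha
      exact ⟨{b | ent i X b}, ⟨i, X, hcX, hiy, hXy, rfl⟩, hent⟩
    obtain ⟨s, ⟨i, V, hcV, hiy, hVy, rfl⟩, hxs⟩ := hwb 𝒮 hstates hne hdir hyU
    exact ⟨i, V, hcV, hiy, hVy, fun a ha => hxs ha⟩
  · rintro ⟨i, V, hcV, hiy, hVy, hentx⟩ 𝒮 hstates hne hdir hyU
    have hsub : (↑(insert i V) : Set A) ⊆ ⋃ s ∈ 𝒮, s := by
      rw [← Set.sUnion_eq_biUnion]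
      refine Set.Subset.trans ?_ hyU
      intro b hb
      simp only [Finset.coe_insert, Set.mem_insert_iff] at hb
      rcases hb with rfl | hb
      · exact hiy
      · exact hVy hb
    obtain ⟨s, hs𝒮, hss⟩ :=
      DirectedOn.exists_mem_subset_of_finset_subset_biUnion hne hdir hsub
    refine ⟨s, hs𝒮, fun a ha => ?_⟩
    have his : i ∈ s := hss (by simp)
    have hVs : ↑V ⊆ s := fun b hb => hss (by simp [hb])
    exact (hstates s hs𝒮).2.1 i his V hVs hcV a (hentx a ha)
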